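/- Let c₁, c₂, r > 0, set c = c₁ + c₂, assume r ≥ c, and let w > 0 satisfy w·e^w = r·e/c (so w ≥ 1). Then β₁* = c₁/(c·w) is the unique maximizer of the function f(β₁) = (1 − β₁·c/c₁)·r·log(β₁·r/c₁) over the interval [c₁/r, c₁/c]; that is, f(β₁*) ≥ f(β₁) for all β₁ in [c₁/r, c₁/c], with equality only at β₁ = β₁*. -/

import Mathlib

private lemma key_ineq (w R t : ℝ) (hw : 0 < w) (hR0 : 0 < R)
    (hR : Real.log R = w + Real.log w - 1) (ht0 : 0 < t) (ht1 : t ≤ 1) :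
    (1 - t) * Real.log (t * R) ≤ (w - 1) ^ 2 / w - w * (t - 1 / w) ^ 2 := by
  have h1 : Real.log (t * R) = Real.log t + Real.log R := Real.log_mul ht0.ne' hR0.ne'
  have h2 : Real.log t = Real.log (t * w) - Real.log w := by
    rw [Real.log_mul ht0.ne' hw.ne']; ring
  have h3 : Real.log (t * w) ≤ t * w - 1 := Real.log_le_sub_one_of_pos (by positivity)
  have h4 : Real.log (t * R) ≤ t * w + w - 2 := by rw [h1, h2, hR]; linarith
  have h5 : (1 - t) * Real.log (t * R) ≤ (1 - t) * (t * w + w - 2) :=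
    mul_le_mul_of_nonneg_left h4 (by linarith)
  have h6 : (1 - t) * (t * w + w - 2) = (w - 1) ^ 2 / w - w * (t - 1 / w) ^ 2 := by
    field_simp; ring
  linarith

/-- `β₁* = c₁ / (c * w)` is the unique maximizer of
`f β₁ = (1 - β₁ * c / c₁) * r * log (β₁ * r / c₁)` over `[c₁ / r, c₁ / c]`,
where `c = c₁ + c₂`, `r ≥ c` and `w > 0` solves `w * exp w = r * e / c`. -/
theorem stmt_4 (c₁ c₂ r c w : ℝ) (hc₁ : 0 < c₁) (hc₂ : 0 < c₂) (hr : 0 < r)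
    (hc : c = c₁ + c₂) (hrc : c ≤ r) (hw : 0 < w)
    (hW : w * Real.exp w = r * Real.exp 1 / c) :
    (∀ β₁ ∈ Set.Icc (c₁ / r) (c₁ / c),
        (1 - β₁ * c / c₁) * r * Real.log (β₁ * r / c₁) ≤
          (1 - (c₁ / (c * w)) * c / c₁) * r * Real.log ((c₁ / (c * w)) * r / c₁)) ∧
    (∀ β₁ ∈ Set.Icc (c₁ / r) (c₁ / c),
        (1 - β₁ * c / c₁) * r * Real.log (β₁ * r / c₁) =
          (1 - (c₁ / (c * w)) * c / c₁) * r * Real.log ((c₁ / (c * w)) * r / c₁) →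
        β₁ = c₁ / (c * w)) := by
  have hc0 : 0 < c := by rw [hc]; positivity
  have hR0 : 0 < r / c := by positivity
  -- log (r/c) = w + log w - 1
  have hR : Real.log (r / c) = w + Real.log w - 1 := by
    have h := congrArg Real.log hW
    rw [Real.log_mul hw.ne' (Real.exp_pos w).ne', Real.log_exp] at h
    have h2 : Real.log (r * Real.exp 1 / c) = Real.log (r / c) + 1 := by
      rw [show r * Real.exp 1 / c = (r / c) * Real.exp 1 by ring,
        Real.log_mul hR0.ne' (Real.exp_pos 1).ne', Real.log_exp]
    linarith [h.trans h2]
  -- value at β₁*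
  have hstar : (1 - (c₁ / (c * w)) * c / c₁) * r * Real.log ((c₁ / (c * w)) * r / c₁)
      = r * ((w - 1) ^ 2 / w) := by
    have e1 : (1 - (c₁ / (c * w)) * c / c₁) = 1 - 1 / w := by
      field_simp
    have e2 : (c₁ / (c * w)) * r / c₁ = (1 / w) * (r / c) := by
      field_simp
    have e3 : Real.log ((1 / w) * (r / c)) = w - 1 := by
      rw [Real.log_mul (by positivity) hR0.ne', one_div, Real.log_inv, hR]; ring
    rw [e1, e2, e3]; field_simp
  have main : ∀ β₁ ∈ Set.Icc (c₁ / r) (c₁ / c),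
      (1 - β₁ * c / c₁) * r * Real.log (β₁ * r / c₁)
        ≤ r * ((w - 1) ^ 2 / w) - r * (w * (β₁ * c / c₁ - 1 / w) ^ 2) := by
    intro β₁ hβ
    obtain ⟨hβ1, hβ2⟩ := hβ
    set t : ℝ := β₁ * c / c₁ with ht
    have hβpos : 0 < β₁ := lt_of_lt_of_le (by positivity) hβ1
    have ht0 : 0 < t := by positivity
    have ht1 : t ≤ 1 := by
      rw [ht, div_le_one hc₁]
      calc β₁ * c ≤ (c₁ / c) * c := by nlinarith
        _ = c₁ := by field_simp
    have harg : β₁ * r / c₁ = t * (r / c) := by rw [ht]; field_simp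
    have := key_ineq w (r / c) t hw hR0 hR ht0 ht1
    have hfin : (1 - t) * Real.log (t * (r / c)) * r
        ≤ ((w - 1) ^ 2 / w - w * (t - 1 / w) ^ 2) * r :=
      mul_le_mul_of_nonneg_right this hr.le
    rw [harg]
    calc (1 - t) * r * Real.log (t * (r / c))
        = (1 - t) * Real.log (t * (r / c)) * r := by ring
      _ ≤ ((w - 1) ^ 2 / w - w * (t - 1 / w) ^ 2) * r := hfin
      _ = r * ((w - 1) ^ 2 / w) - r * (w * (t - 1 / w) ^ 2) := by ring
  constructor
  · intro β₁ hβ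
    have := main β₁ hβ
    have hsq : 0 ≤ r * (w * (β₁ * c / c₁ - 1 / w) ^ 2) := by positivity
    rw [hstar]; linarith
  · intro β₁ hβ heq
    have h1 := main β₁ hβ
    rw [hstar] at heq
    have hsq : r * (w * (β₁ * c / c₁ - 1 / w) ^ 2) ≤ 0 := by linarith
    have hz : (β₁ * c / c₁ - 1 / w) ^ 2 = 0 := by
      by_contra h
      have : 0 < (β₁ * c / c₁ - 1 / w) ^ 2 :=
        lt_of_le_of_ne (sq_nonneg _) (Ne.symm h)
      nlinarith [mul_pos hr (mul_pos hw this)]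
    have hz2 : β₁ * c / c₁ = 1 / w := by
      have := pow_eq_zero_iff (n := 2) (by norm_num) |>.mp hz
      linarith [sub_eq_zero.mp this]
    field_simp at hz2 ⊢
    nlinarith [hz2]
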